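/- In a cDG containing all loops, if (α,β,C) is not a virtual collider tripath and α≠β, then β and α are m-separated by an({α,β}∪C)∖{α,β}. -/

import Mathlib

universe u

/-- A directed correlation graph (cDG): directed edges (loops allowed) and
blunt edges (symmetric, no loops). -/
structure CDG (V : Type u) where
  dir : V → V → Prop
  blunt : V → V → Prop
  blunt_symm : ∀ a b, blunt a b → blunt b a
  blunt_irrefl : ∀ a, ¬ blunt a a

namespace CDG

variable {V : Type u}

/-- `anc D a b` : `a` is an ancestor of `b` (directed path from `a` to `b`;
every node is its own ancestor). -/
def anc (D : CDG V) (a b : V) : Prop := Relation.ReflTransGen D.dir a b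

/-- `an(C)`: the set of ancestors of `C`. -/
def ancSet (D : CDG V) (C : Set V) : Set V := {a | ∃ c ∈ C, D.anc a c}

/-- An edge instance between `a` and `b`, with its orientation. -/
inductive Edge (D : CDG V) : V → V → Type u
  | fwd {a b : V} : D.dir a b → Edge D a b
  | bwd {a b : V} : D.dir b a → Edge D a b
  | bl  {a b : V} : D.blunt a b → Edge D a b

/-- The edge has a neck (head or stump) at its left endpoint. -/
def Edge.neckLeft {D : CDG V} {a b : V} : D.Edge a b → Prop
  | .fwd _ => False
  | .bwd _ => True
  | .bl _ => True

/-- The edge has a neck (head or stump) at its right endpoint. -/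
def Edge.neckRight {D : CDG V} {a b : V} : D.Edge a b → Prop
  | .fwd _ => True
  | .bwd _ => False
  | .bl _ => True

/-- The edge has a head (arrowhead) at its right endpoint. -/
def Edge.headRight {D : CDG V} {a b : V} : D.Edge a b → Prop
  | .fwd _ => True
  | _ => False

/-- The edge is a blunt edge. -/
def Edge.isBlunt {D : CDG V} {a b : V} : D.Edge a b → Prop
  | .bl _ => True
  | _ => False

/-- A walk from `a` to `b` in `D`. -/
inductive Walk (D : CDG V) : V → V → Type u
  | nil (a : V) : Walk D a a
  | cons {a m c : V} : D.Edge a m → Walk D m c → Walk D a c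

namespace Walk

variable {D : CDG V}

def length : ∀ {a b : V}, D.Walk a b → ℕ
  | _, _, .nil _ => 0
  | _, _, .cons _ w => w.length + 1

def support : ∀ {a b : V}, D.Walk a b → List V
  | a, _, .nil _ => [a]
  | a, _, .cons _ w => a :: w.support

/-- The list of nonendpoint (internal) node instances of a walk. -/
def internal : ∀ {a b : V}, D.Walk a b → List V
  | _, _, .nil _ => []
  | _, _, .cons _ (.nil _) => []
  | _, _, .cons (m := m) _ w => m :: w.internal

/-- The final edge of the walk has a head at the terminal node. -/
def lastHead : ∀ {a b : V}, D.Walk a b → Prop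
  | _, _, .nil _ => False
  | _, _, .cons e (.nil _) => e.headRight
  | _, _, .cons _ w => w.lastHead

/-- Every collider on the walk is in `an(C)` and no noncollider is in `C`. -/
def mOpen (C : Set V) : ∀ {a b : V}, D.Walk a b → Prop
  | _, _, .nil _ => True
  | _, _, .cons _ (.nil _) => True
  | _, _, .cons (m := m) e₁ (.cons e₂ w) =>
      ((e₁.neckRight ∧ e₂.neckLeft) → m ∈ D.ancSet C) ∧
      (¬ (e₁.neckRight ∧ e₂.neckLeft) → m ∉ C) ∧
      mOpen C (Walk.cons e₂ w)

/-- Every nonendpoint node of the walk is a collider. -/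
def allColliders : ∀ {a b : V}, D.Walk a b → Prop
  | _, _, .nil _ => True
  | _, _, .cons _ (.nil _) => True
  | _, _, .cons e₁ (.cons e₂ w) =>
      e₁.neckRight ∧ e₂.neckLeft ∧ allColliders (Walk.cons e₂ w)

/-- Every edge of the walk is blunt. -/
def allBlunt : ∀ {a b : V}, D.Walk a b → Prop
  | _, _, .nil _ => True
  | _, _, .cons e w => e.isBlunt ∧ w.allBlunt

end Walk

/-- There is a μ-connecting walk from `a` to `b` given `C`. -/
def muConn (D : CDG V) (C : Set V) (a b : V) : Prop :=
  a ∉ C ∧ ∃ w : D.Walk a b, w.mOpen C ∧ w.lastHead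

/-- `B` is μ-separated from `A` given `C`. -/
def muSep (D : CDG V) (A B C : Set V) : Prop :=
  ∀ a ∈ A, ∀ b ∈ B, ¬ D.muConn C a b

/-- The independence model of `D`: all μ-separation triples. -/
def indep (D : CDG V) : Set (Set V × Set V × Set V) :=
  {p | D.muSep p.1 p.2.1 p.2.2}

/-- A (nontrivial) collider path. -/
def IsColliderPath {D : CDG V} {a b : V} (w : D.Walk a b) : Prop :=
  0 < w.length ∧ w.support.Nodup ∧ w.allColliders

/-- `a` and `b` are collider connected: some nontrivial walk between them has
every nonendpoint node a collider. -/
def colliderConn (D : CDG V) (a b : V) : Prop :=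
  ∃ w : D.Walk a b, 0 < w.length ∧ w.allColliders

/-- A weak inducing path from `a` to `b`: a collider path whose nonendpoint
nodes are all ancestors of `a` or of `b`. -/
def WeakInducing (D : CDG V) (a b : V) : Prop :=
  ∃ w : D.Walk a b, IsColliderPath w ∧ ∀ m ∈ w.internal, D.anc m a ∨ D.anc m b

/-- A weak inducing path between `a` and `b` (in either direction). -/
def WeakInducingBetween (D : CDG V) (a b : V) : Prop :=
  D.WeakInducing a b ∨ D.WeakInducing b a

end CDG

/-- The strongly connected component of `v`. -/
def CDG.scc {V : Type} (D : CDG V) (v : V) : Set V :=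
  {w | D.anc v w ∧ D.anc w v}

/-- `C` is a strongly connected component of `D`. -/
def CDG.IsSCC {V : Type} (D : CDG V) (C : Set V) : Prop := ∃ v, C = D.scc v

/-- There is an `m`-connecting path between `a` and `b` given `S`: a path with
every collider in an(S) and no noncollider in S. -/
def CDG.mConn {V : Type} (D : CDG V) (S : Set V) (a b : V) : Prop :=
  ∃ w : D.Walk a b, 0 < w.length ∧ w.support.Nodup ∧ w.mOpen S

/-- `A` and `B` are m-separated given `S`. -/
def CDG.mSep {V : Type} (D : CDG V) (A B S : Set V) : Prop :=
  ∀ a ∈ A, ∀ b ∈ B, ¬ D.mConn S a b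

/-- `(α,β,C)` is a virtual collider tripath: `C` is a strongly connected
component or ∅ and some nontrivial collider path from α to β has all its
nonendpoint nodes in an({α,β}∪C). -/
def CDG.VCT {V : Type} (D : CDG V) (α β : V) (C : Set V) : Prop :=
  (D.IsSCC C ∨ C = ∅) ∧
  ∃ w : D.Walk α β, CDG.IsColliderPath w ∧
    ∀ m ∈ w.internal, m ∈ D.ancSet ({α, β} ∪ C)


namespace CDG
variable {V : Type u} {D : CDG V}

def Edge.rev : ∀ {a b : V}, D.Edge a b → D.Edge b a
  | _, _, .fwd h => .bwd h
  | _, _, .bwd h => .fwd h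
  | _, _, .bl h => .bl (D.blunt_symm _ _ h)

lemma Edge.rev_neckLeft {a b : V} (e : D.Edge a b) : e.rev.neckLeft ↔ e.neckRight := by
  cases e <;> simp [Edge.rev, Edge.neckLeft, Edge.neckRight]

lemma Edge.rev_neckRight {a b : V} (e : D.Edge a b) : e.rev.neckRight ↔ e.neckLeft := by
  cases e <;> simp [Edge.rev, Edge.neckLeft, Edge.neckRight]

namespace Walk

def snoc : ∀ {a b c : V}, D.Walk a b → D.Edge b c → D.Walk a c
  | _, _, _, .nil _, e => .cons e (.nil _)
  | _, _, _, .cons f w, e => .cons f (w.snoc e)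

def reverse : ∀ {a b : V}, D.Walk a b → D.Walk b a
  | _, _, .nil a => .nil a
  | _, _, .cons e w => w.reverse.snoc e.rev

lemma length_snoc : ∀ {a b c : V} (w : D.Walk a b) (e : D.Edge b c),
    (w.snoc e).length = w.length + 1
  | _, _, _, .nil _, e => rfl
  | _, _, _, .cons f w, e => by simp [snoc, length, length_snoc w e]

lemma length_reverse : ∀ {a b : V} (w : D.Walk a b), w.reverse.length = w.length
  | _, _, .nil _ => rfl
  | _, _, .cons e w => by simp [reverse, length, length_snoc, length_reverse w]

lemma support_snoc : ∀ {a b c : V} (w : D.Walk a b) (e : D.Edge b c),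
    (w.snoc e).support = w.support ++ [c]
  | _, _, _, .nil _, e => rfl
  | _, _, _, .cons f w, e => by simp [snoc, support, support_snoc w e]

lemma support_reverse : ∀ {a b : V} (w : D.Walk a b), w.reverse.support = w.support.reverse
  | _, _, .nil _ => rfl
  | _, _, .cons e w => by simp [reverse, support, support_snoc, support_reverse w]

def lastNeckR : ∀ {a b : V}, D.Walk a b → Prop
  | _, _, .nil _ => True
  | _, _, .cons e (.nil _) => e.neckRight
  | _, _, .cons _ (.cons f w) => (Walk.cons f w).lastNeckR

def firstNeckL : ∀ {a b : V}, D.Walk a b → Prop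
  | _, _, .nil _ => True
  | _, _, .cons e _ => e.neckLeft

lemma lastNeckR_snoc : ∀ {a b c : V} (w : D.Walk a b) (e : D.Edge b c),
    (w.snoc e).lastNeckR ↔ e.neckRight
  | _, _, _, .nil _, e => Iff.rfl
  | _, _, _, .cons f (.nil _), e => Iff.rfl
  | _, _, _, .cons f (.cons g w), e => by
      simpa [snoc, lastNeckR] using lastNeckR_snoc (Walk.cons g w) e

lemma lastNeckR_reverse : ∀ {a b : V} (w : D.Walk a b), w.reverse.lastNeckR ↔ w.firstNeckL
  | _, _, .nil _ => Iff.rfl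
  | _, _, .cons e w => by
      simp [reverse, firstNeckL, lastNeckR_snoc, Edge.rev_neckRight]

lemma allColliders_snoc_of : ∀ {a b c : V} (w : D.Walk a b) (e : D.Edge b c),
    w.allColliders → w.lastNeckR → e.neckLeft → (w.snoc e).allColliders
  | _, _, _, .nil _, e, _, _, _ => trivial
  | _, _, _, .cons f (.nil _), e, _, hl, he => ⟨hl, he, trivial⟩
  | _, _, _, .cons f (.cons g w), e, hac, hl, he => by
      obtain ⟨h1, h2, h3⟩ := hac
      exact ⟨h1, h2, allColliders_snoc_of (Walk.cons g w) e h3 hl he⟩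

lemma allColliders_reverse : ∀ {a b : V} (w : D.Walk a b),
    w.allColliders → w.reverse.allColliders
  | _, _, .nil _, _ => trivial
  | _, _, .cons e (.nil _), _ => trivial
  | _, _, .cons e (.cons g w), hac => by
      obtain ⟨h1, h2, h3⟩ := hac
      exact allColliders_snoc_of _ _ (allColliders_reverse _ h3)
        ((lastNeckR_reverse _).mpr h2) ((Edge.rev_neckLeft e).mpr h1)

lemma support_eq : ∀ {a b : V} (w : D.Walk a b), 0 < w.length →
    w.support = a :: (w.internal ++ [b])
  | _, _, .nil _, h => absurd h (by simp [length])
  | _, _, .cons e (.nil _), _ => rfl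
  | _, _, .cons e (.cons g w), _ => by
      have h := support_eq (Walk.cons g w) (by simp [length])
      simp only [support, List.cons.injEq, true_and] at h
      simp [support, internal, h]

end Walk

lemma anc_mem_ancSet {U : Set V} {a x : V} (h : D.anc a x) (hx : x ∈ D.ancSet U) :
    a ∈ D.ancSet U := by
  obtain ⟨c, hc, hxc⟩ := hx
  exact ⟨c, hc, h.trans hxc⟩

lemma ancSet_diff_subset {U : Set V} {T : Set V} :
    D.ancSet (D.ancSet U \ T) ⊆ D.ancSet U := by
  rintro m ⟨s, hs, hms⟩
  exact anc_mem_ancSet hms hs.1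

/-- If the first edge of an m-open walk points forward out of `a`, then `a` is an
ancestor of `an(U)` provided the terminal node is. -/
lemma fwd_in_T {U : Set V} {α β : V} :
    ∀ {x b : V} (w : D.Walk x b) {a : V} (e : D.Edge a x),
      (Walk.cons e w).mOpen (D.ancSet U \ {α, β}) → b ∈ D.ancSet U →
      ¬ e.neckLeft → a ∈ D.ancSet U := by
  intro x b w
  induction w with
  | nil x =>
    intro a e _ hb hne
    cases e with
    | fwd h => exact anc_mem_ancSet (Relation.ReflTransGen.single h) hb
    | bwd h => exact absurd trivial hne
    | bl h => exact absurd trivial hne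
  | cons e₂ w' ih =>
    intro a e hm hb hne
    obtain ⟨hcol, hnon, hrest⟩ := hm
    cases e with
    | fwd hdir =>
      by_cases hL : e₂.neckLeft
      · exact anc_mem_ancSet (Relation.ReflTransGen.single hdir)
          (ancSet_diff_subset (hcol ⟨trivial, hL⟩))
      · exact anc_mem_ancSet (Relation.ReflTransGen.single hdir) (ih e₂ hrest hb hL)
    | bwd h => exact absurd trivial hne
    | bl h => exact absurd trivial hne

lemma key_lemma {U : Set V} {α β : V} :
    ∀ {a b : V} (w : D.Walk a b),
      w.mOpen (D.ancSet U \ {α, β}) →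
      (∀ m ∈ w.internal, m ≠ α ∧ m ≠ β) →
      a ∈ D.ancSet U → b ∈ D.ancSet U →
      w.allColliders ∧ ∀ m ∈ w.internal, m ∈ D.ancSet U
  | _, _, .nil _, _, _, _, _ => ⟨trivial, by simp [Walk.internal]⟩
  | _, _, .cons _ (.nil _), _, _, _, _ => ⟨trivial, by simp [Walk.internal]⟩
  | a, b, .cons (m := mid) e₁ (.cons e₂ w''), hm, hint, ha, hb => by
      obtain ⟨hcol, hnon, hrest⟩ := hm
      have hmid_ne : mid ≠ α ∧ mid ≠ β := hint mid (by simp [Walk.internal])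
      by_cases hc : e₁.neckRight ∧ e₂.neckLeft
      · have hmidT : mid ∈ D.ancSet U := ancSet_diff_subset (hcol hc)
        have hint' : ∀ m ∈ (Walk.cons e₂ w'').internal, m ≠ α ∧ m ≠ β := by
          intro m hmem; exact hint m (by simp [Walk.internal, hmem])
        obtain ⟨hall, hmem⟩ := key_lemma (Walk.cons e₂ w'') hrest hint' hmidT hb
        refine ⟨⟨hc.1, hc.2, hall⟩, ?_⟩
        intro m hmem'
        simp only [Walk.internal, List.mem_cons] at hmem'
        rcases hmem' with rfl | hmem'
        · exact hmidT
        · exact hmem m hmem'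
      · exfalso
        have hmidT : mid ∈ D.ancSet U := by
          by_cases hL : e₂.neckLeft
          · have hR : ¬ e₁.neckRight := fun hR => hc ⟨hR, hL⟩
            cases e₁ with
            | fwd h => exact absurd trivial hR
            | bwd h => exact anc_mem_ancSet (Relation.ReflTransGen.single h) ha
            | bl h => exact absurd trivial hR
          · exact fwd_in_T w'' e₂ hrest hb hL
        exact (hnon hc) ⟨hmidT, by simp [hmid_ne.1, hmid_ne.2]⟩

end CDG

/-- If `(α,β,C)` is not a virtual collider tripath and α≠β, then
β and α are m-separated by an({α,β}∪C)∖{α,β}. -/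
theorem stmt11 {V : Type} (D : CDG V) (hloops : ∀ a, D.dir a a) (α β : V)
    (C : Set V) (hC : D.IsSCC C ∨ C = ∅) (hne : α ≠ β) (h : ¬ D.VCT α β C) :
    D.mSep {β} {α} (D.ancSet ({α, β} ∪ C) \ {α, β}) := by
  intro b hb a ha hconn
  simp only [Set.mem_singleton_iff] at hb ha
  subst hb; subst ha
  obtain ⟨w, hlen, hnodup, hopen⟩ := hconn
  set U : Set V := {a, b} ∪ C with hU
  have haT : a ∈ D.ancSet U := ⟨a, by simp [hU], Relation.ReflTransGen.refl⟩
  have hbT : b ∈ D.ancSet U := ⟨b, by simp [hU], Relation.ReflTransGen.refl⟩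
  have hsup := CDG.Walk.support_eq w hlen
  have hint : ∀ m ∈ w.internal, m ≠ a ∧ m ≠ b := by
    intro m hm
    rw [hsup] at hnodup
    rcases List.nodup_cons.mp hnodup with ⟨hbnot, hrest⟩
    constructor
    · rintro rfl
      rcases List.nodup_append'.mp hrest with ⟨_, _, hdisj⟩
      exact hdisj hm (by simp)
    · rintro rfl
      exact hbnot (by simp [hm])
  obtain ⟨hall, hmem⟩ := CDG.key_lemma (α := a) (β := b) w hopen hint hbT haT
  apply h
  refine ⟨hC, w.reverse, ⟨?_, ?_, CDG.Walk.allColliders_reverse w hall⟩, ?_⟩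
  · rwa [CDG.Walk.length_reverse]
  · rw [CDG.Walk.support_reverse]; exact List.nodup_reverse.mpr hnodup
  · -- internal of reverse equals reverse of internal
    have hlenr : 0 < w.reverse.length := by rwa [CDG.Walk.length_reverse]
    have h1 := CDG.Walk.support_eq w.reverse hlenr
    rw [CDG.Walk.support_reverse, hsup] at h1
    simp only [List.reverse_cons, List.reverse_append] at h1
    have h2 : w.reverse.internal = w.internal.reverse := by
      simp only [List.reverse_nil, List.nil_append, List.cons_append, List.append_assoc,
        List.cons.injEq, true_and] at h1
      simpa using h1.symm
    intro m hm
    rw [h2, List.mem_reverse] at hm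
    exact hmem m hm
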